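/- arXiv:2506.03204 — 2 statements merged into one kernel-verified Lean document; each statement's English description precedes it below -/
import Mathlib

section
/- Consider the first-order language L with two binary relation symbols, and endow the set ℕ₊ of positive natural numbers with the L-structure in which the first relation symbol is interpreted as the strict order < and the second as the divisibility relation ∣. Then the graph of addition, i.e. the set {v : Fin 3 → ℕ₊ | v 0 + v 1 = v 2}, is definable in this structure without parameters. -/
/-- The type of relation symbols of the language `L`: two binary relation symbols. -/
inductive OrdDvdRel : ℕ → Type
  | lt : OrdDvdRel 2
  | dvd : OrdDvdRel 2

/-- The first-order language with two binary relation symbols. -/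
def L : FirstOrder.Language := ⟨fun _ => Empty, OrdDvdRel⟩

/-- The `L`-structure on the positive natural numbers ℕ₊ interpreting the first relation
symbol as the strict order `<` and the second as divisibility `∣`. -/
instance : L.Structure ℕ+ where
  funMap := fun f _ => f.elim
  RelMap := fun {n} r v =>
    match n, r, v with
    | _, .lt, v => v 0 < v 1
    | _, .dvd, v => v 0 ∣ v 1

set_option maxHeartbeats 1000000

open FirstOrder FirstOrder.Language

/-! ### Arithmetic core -/

/-- Core uniqueness: the witnesses force `a + b = c`. -/
lemma core1 {a b c m k j : ℕ} (hm : m.Prime)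
    (hcm : c < m) (ham : 2*a < m) (hbm : 2*b < m)
    (h1 : m ∣ k*a+1) (h2 : m ∣ j*(k*b)+1) (h3 : m ∣ j*(k*c+1)+1) : a + b = c := by
  haveI := Fact.mk hm
  have e1 : ((k : ZMod m) * a + 1 = 0) := by
    have := (ZMod.natCast_eq_zero_iff _ _).mpr h1; push_cast at this
    linear_combination this
  have e2 : ((j : ZMod m) * ((k : ZMod m) * b) + 1 = 0) := by
    have := (ZMod.natCast_eq_zero_iff _ _).mpr h2; push_cast at this
    linear_combination this
  have e3 : ((j : ZMod m) * ((k : ZMod m) * c + 1) + 1 = 0) := by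
    have := (ZMod.natCast_eq_zero_iff _ _).mpr h3; push_cast at this
    linear_combination this
  have hj : (j : ZMod m) ≠ 0 := by
    intro h; rw [h] at e2; simp at e2
  have hk : (k : ZMod m) ≠ 0 := by
    intro h; rw [h] at e1; simp at e1
  have e4 : (k : ZMod m) * b = (k : ZMod m) * c + 1 :=
    mul_left_cancel₀ hj (by linear_combination e2 - e3)
  have e5 : ((a : ZMod m) + b) = c :=
    mul_left_cancel₀ hk (by linear_combination e1 + e4)
  have e6 : (a + b) ≡ c [MOD m] := by
    rw [← ZMod.natCast_eq_natCast_iff]; push_cast; exact e5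
  have hab : a + b < m := by rcases le_total a b with h | h <;> omega
  have := e6.eq_of_lt_of_lt hab hcm
  omega

/-- Pick a positive number in a given residue class mod `m` that is coprime to `N`. -/
lemma pick {m N : ℕ} (h : Nat.Coprime m N) (hN : 2 ≤ N) (k0 : ℕ) :
    ∃ k : ℕ, 0 < k ∧ k ≡ k0 [MOD m] ∧ Nat.Coprime k N := by
  obtain ⟨k, hk1, hk2⟩ := Nat.chineseRemainder h k0 1
  have hmod : k % N = 1 := by
    have := hk2; unfold Nat.ModEq at this
    rwa [Nat.one_mod_eq_one.mpr (by omega)] at this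
  have hpos : 0 < k := by
    rcases Nat.eq_zero_or_pos k with h0 | h0
    · subst h0; rw [Nat.zero_mod] at hmod; omega
    · exact h0
  refine ⟨k, hpos, hk1, ?_⟩
  rw [Nat.Coprime, Nat.gcd_comm, Nat.gcd_rec, hmod, Nat.gcd_one_left]

lemma not_dvd_of_lt {m x : ℕ} (hx : 0 < x) (h : x < m) : ¬ m ∣ x :=
  fun hd => absurd (Nat.le_of_dvd hx hd) (by omega)

/-- Core existence of witnesses. -/
lemma core2 {a b c : ℕ} (ha : 0 < a) (hb : 0 < b) (hc : c = a + b) :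
    ∃ m k j : ℕ, m.Prime ∧ c < m ∧ 2*a < m ∧ 2*b < m ∧ 0 < k ∧ 0 < j ∧
      Nat.Coprime k a ∧ Nat.Coprime k b ∧ Nat.Coprime k c ∧
      Nat.Coprime j (k*b) ∧ Nat.Coprime j (k*c+1) ∧
      m ∣ k*a+1 ∧ m ∣ j*(k*b)+1 ∧ m ∣ j*(k*c+1)+1 := by
  obtain ⟨m, hm2c, hm⟩ := Nat.exists_infinite_primes (2*c+1)
  haveI := Fact.mk hm
  have hcm : c < m := by omega
  have ham : 2*a < m := by omega
  have hbm : 2*b < m := by omega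
  have hma : ¬ m ∣ a := not_dvd_of_lt ha (by omega)
  have hmb : ¬ m ∣ b := not_dvd_of_lt hb (by omega)
  have hmc : ¬ m ∣ c := not_dvd_of_lt (by omega) hcm
  have hA : (a : ZMod m) ≠ 0 := fun h => hma ((ZMod.natCast_eq_zero_iff _ _).mp h)
  have hB : (b : ZMod m) ≠ 0 := fun h => hmb ((ZMod.natCast_eq_zero_iff _ _).mp h)
  have hcop : Nat.Coprime m (a*(b*c)) :=
    ((hm.coprime_iff_not_dvd.mpr hma).mul_right
      ((hm.coprime_iff_not_dvd.mpr hmb).mul_right (hm.coprime_iff_not_dvd.mpr hmc)))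
  have habc : 2 ≤ a*(b*c) := by
    have h2c : 2 ≤ c := by omega
    have := Nat.mul_le_mul ha (Nat.mul_le_mul hb h2c)
    simpa using this
  obtain ⟨k, hkpos, hkmod, hkcop⟩ := pick hcop habc (-(a : ZMod m)⁻¹).val
  have hka : Nat.Coprime k a := Nat.Coprime.coprime_dvd_right ⟨b*c, rfl⟩ hkcop
  have hkb : Nat.Coprime k b :=
    Nat.Coprime.coprime_dvd_right ⟨a*c, by ring⟩ hkcop
  have hkc : Nat.Coprime k c := Nat.Coprime.coprime_dvd_right ⟨a*b, by ring⟩ hkcop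
  have hkcast : (k : ZMod m) = -(a : ZMod m)⁻¹ := by
    have := (ZMod.natCast_eq_natCast_iff _ _ _).mpr hkmod
    rwa [ZMod.natCast_val, ZMod.cast_id] at this
  have hK : (k : ZMod m) ≠ 0 := by
    rw [hkcast]; simpa using inv_ne_zero hA
  have h1 : m ∣ k*a+1 := by
    rw [← ZMod.natCast_eq_zero_iff]
    push_cast
    rw [hkcast]
    field_simp; ring
  have hX : ((k*b : ℕ) : ZMod m) ≠ 0 := by push_cast; exact mul_ne_zero hK hB
  have hYX : ((k*c+1 : ℕ) : ZMod m) = ((k*b : ℕ) : ZMod m) := by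
    push_cast
    have h1' : (k : ZMod m) * a + 1 = 0 := by
      rw [hkcast]; field_simp; ring
    subst hc; push_cast
    linear_combination h1'
  have hY : ((k*c+1 : ℕ) : ZMod m) ≠ 0 := by rw [hYX]; exact hX
  have hcop2 : Nat.Coprime m ((k*b)*(k*c+1)) := by
    have hmX : ¬ m ∣ k*b := fun h => hX ((ZMod.natCast_eq_zero_iff _ _).mpr h)
    have hmY : ¬ m ∣ k*c+1 := fun h => hY ((ZMod.natCast_eq_zero_iff _ _).mpr h)
    exact (hm.coprime_iff_not_dvd.mpr hmX).mul_right (hm.coprime_iff_not_dvd.mpr hmY)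
  have hXY2 : 2 ≤ (k*b)*(k*c+1) := by
    have h1' : 1 ≤ k*b := Nat.mul_le_mul hkpos hb
    have h2' : 2 ≤ k*c+1 := by
      have := Nat.mul_le_mul hkpos (show 1 ≤ c by omega)
      omega
    have := Nat.mul_le_mul h1' h2'
    simpa using this
  obtain ⟨j, hjpos, hjmod, hjcop⟩ := pick hcop2 hXY2 (-((k*b : ℕ) : ZMod m)⁻¹).val
  have hjX : Nat.Coprime j (k*b) := Nat.Coprime.coprime_dvd_right ⟨k*c+1, rfl⟩ hjcop
  have hjY : Nat.Coprime j (k*c+1) := Nat.Coprime.coprime_dvd_right ⟨k*b, by ring⟩ hjcop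
  have hjcast : (j : ZMod m) = -((k*b : ℕ) : ZMod m)⁻¹ := by
    have := (ZMod.natCast_eq_natCast_iff _ _ _).mpr hjmod
    rwa [ZMod.natCast_val, ZMod.cast_id] at this
  have h2 : m ∣ j*(k*b)+1 := by
    rw [← ZMod.natCast_eq_zero_iff]
    push_cast
    push_cast at hjcast
    rw [hjcast]
    have : (k : ZMod m) * b ≠ 0 := by push_cast at hX; exact hX
    field_simp; ring
  have h3 : m ∣ j*(k*c+1)+1 := by
    rw [← ZMod.natCast_eq_zero_iff]
    have : ((j*(k*c+1)+1 : ℕ) : ZMod m) = ((j*(k*b)+1 : ℕ) : ZMod m) := by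
      push_cast
      push_cast at hYX
      linear_combination (j : ZMod m) * hYX
    rw [this, ZMod.natCast_eq_zero_iff]
    exact h2
  exact ⟨m, k, j, hm, hcm, ham, hbm, hkpos, hjpos, hka, hkb, hkc, hjX, hjY, h1, h2, h3⟩

/-! ### Basic definable relations -/

lemma relMap_lt (v : Fin 2 → ℕ+) :
    Structure.RelMap (L := L) (M := ℕ+) OrdDvdRel.lt v ↔ v 0 < v 1 := Iff.rfl

lemma relMap_dvd (v : Fin 2 → ℕ+) :
    Structure.RelMap (L := L) (M := ℕ+) OrdDvdRel.dvd v ↔ v 0 ∣ v 1 := Iff.rfl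

@[reducible] def fv {α : Type} {n : ℕ} (i : α) : L.Term (α ⊕ Fin n) := Term.var (Sum.inl i)
@[reducible] def bv {α : Type} {n : ℕ} (i : Fin n) : L.Term (α ⊕ Fin n) := Term.var (Sum.inr i)

@[reducible] def tlt {α : Type} {n : ℕ} (t u : L.Term (α ⊕ Fin n)) : L.BoundedFormula α n :=
  Relations.boundedFormula₂ OrdDvdRel.lt t u
@[reducible] def tdvd {α : Type} {n : ℕ} (t u : L.Term (α ⊕ Fin n)) : L.BoundedFormula α n :=
  Relations.boundedFormula₂ OrdDvdRel.dvd t u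

@[simp] lemma realize_tlt {α : Type} {n : ℕ} (t u : L.Term (α ⊕ Fin n)) (v : α → ℕ+)
    (xs : Fin n → ℕ+) :
    (tlt t u).Realize v xs ↔ t.realize (Sum.elim v xs) < u.realize (Sum.elim v xs) := Iff.rfl

@[simp] lemma realize_tdvd {α : Type} {n : ℕ} (t u : L.Term (α ⊕ Fin n)) (v : α → ℕ+)
    (xs : Fin n → ℕ+) :
    (tdvd t u).Realize v xs ↔ t.realize (Sum.elim v xs) ∣ u.realize (Sum.elim v xs) := Iff.rfl

lemma d_lt : Set.Definable (∅ : Set ℕ+) L {v : Fin 2 → ℕ+ | v 0 < v 1} := by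
  rw [Set.empty_definable_iff]
  refine ⟨tlt (fv 0) (fv 1), ?_⟩
  ext v
  simp [Formula.Realize, realize_tlt, realize_tdvd, fv, bv, relMap_lt]

lemma d_dvd : Set.Definable (∅ : Set ℕ+) L {v : Fin 2 → ℕ+ | v 0 ∣ v 1} := by
  rw [Set.empty_definable_iff]
  refine ⟨tdvd (fv 0) (fv 1), ?_⟩
  ext v
  simp [Formula.Realize, realize_tlt, realize_tdvd, fv, bv, relMap_dvd]

lemma d_coprime : Set.Definable (∅ : Set ℕ+) L {v : Fin 2 → ℕ+ | (v 0).Coprime (v 1)} := by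
  rw [Set.empty_definable_iff]
  refine ⟨BoundedFormula.all
    ((tdvd (bv 0) (fv 0)).imp ((tdvd (bv 0) (fv 1)).imp
      (BoundedFormula.all (tdvd (bv 0) (bv 1))))), ?_⟩
  ext v
  simp only [Set.mem_setOf_eq, Formula.Realize, BoundedFormula.realize_all,
    BoundedFormula.realize_imp, BoundedFormula.realize_rel₂, Term.realize_var,
    Sum.elim_inl, Sum.elim_inr, realize_tlt, realize_tdvd, fv, bv, relMap_dvd,
    Matrix.cons_val_zero, Matrix.cons_val_one, Matrix.head_cons, Fin.snoc,
    Fin.val_zero, Fin.val_one, Nat.lt_irrefl, Nat.zero_lt_one, dif_pos, dif_neg,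
    Fin.castLT, cast_eq, dite_false, dite_true]
  constructor
  · intro h d hd0 hd1 e
    have hdg : d ∣ PNat.gcd (v 0) (v 1) := PNat.dvd_gcd hd0 hd1
    rw [PNat.Coprime] at h
    rw [h] at hdg
    rw [(PNat.dvd_one_iff d).mp hdg]
    exact one_dvd e
  · intro h
    have := h (PNat.gcd (v 0) (v 1)) (PNat.gcd_dvd_left _ _) (PNat.gcd_dvd_right _ _) 1
    exact (PNat.dvd_one_iff _).mp this

lemma d_prime : Set.Definable (∅ : Set ℕ+) L {v : Fin 1 → ℕ+ | ((v 0 : ℕ)).Prime} := by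
  rw [Set.empty_definable_iff]
  refine ⟨(∃' (tlt (bv 0) (fv 0))) ⊓
    (BoundedFormula.all ((tdvd (bv 0) (fv 0)).imp
      ((BoundedFormula.all (tdvd (bv 0) (bv 1))) ⊔ (tdvd (fv 0) (bv 0))))), ?_⟩
  ext v
  simp only [Set.mem_setOf_eq, Formula.Realize, BoundedFormula.realize_all,
    BoundedFormula.realize_ex, BoundedFormula.realize_inf, BoundedFormula.realize_sup,
    BoundedFormula.realize_imp, BoundedFormula.realize_rel₂, Term.realize_var,
    Sum.elim_inl, Sum.elim_inr, realize_tlt, realize_tdvd, fv, bv, relMap_dvd, relMap_lt,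
    Matrix.cons_val_zero, Matrix.cons_val_one, Matrix.head_cons, Fin.snoc,
    Fin.val_zero, Fin.val_one, Nat.lt_irrefl, Nat.zero_lt_one, dif_pos, dif_neg,
    Fin.castLT, cast_eq, dite_false, dite_true]
  constructor
  · intro hp
    have h2 : 2 ≤ (v 0 : ℕ) := hp.two_le
    constructor
    · exact ⟨1, by rw [← PNat.coe_lt_coe]; simp; omega⟩
    · intro d hd
      have : (d : ℕ) ∣ (v 0 : ℕ) := PNat.dvd_iff.mp hd
      rcases (Nat.prime_def.mp hp).2 _ this with h1 | h1
      · left; intro e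
        have : d = 1 := by rwa [← PNat.coe_inj, PNat.one_coe]
        rw [this]; exact one_dvd e
      · right
        have : d = v 0 := by rwa [← PNat.coe_inj]
        rw [this]
  · rintro ⟨⟨x, hx⟩, hdiv⟩
    rw [Nat.prime_def]
    constructor
    · have : (1 : ℕ+) ≤ x := x.one_le
      have hlt := hx
      rw [← PNat.coe_lt_coe] at hlt
      have := x.one_le
      rw [← PNat.coe_le_coe] at this
      simp only [PNat.one_coe] at this
      omega
    · intro d hd
      have hdpos : 0 < d := Nat.pos_of_dvd_of_pos hd (v 0).pos
      have hd' : (⟨d, hdpos⟩ : ℕ+) ∣ v 0 := PNat.dvd_iff.mpr hd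
      rcases hdiv _ hd' with h1 | h1
      · left
        have := (PNat.dvd_one_iff _).mp (h1 1)
        exact congrArg PNat.val this
      · right
        have := PNat.dvd_antisymm hd' h1
        exact congrArg PNat.val this

lemma d_succ : Set.Definable (∅ : Set ℕ+) L {v : Fin 2 → ℕ+ | v 1 = v 0 + 1} := by
  rw [Set.empty_definable_iff]
  refine ⟨(tlt (fv 0) (fv 1)) ⊓
    (BoundedFormula.all ((tlt (fv 0) (bv 0)).imp (∼(tlt (bv 0) (fv 1))))), ?_⟩
  ext v
  simp only [Set.mem_setOf_eq, Formula.Realize, BoundedFormula.realize_all,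
    BoundedFormula.realize_inf, BoundedFormula.realize_imp, BoundedFormula.realize_not,
    BoundedFormula.realize_rel₂, Term.realize_var,
    Sum.elim_inl, Sum.elim_inr, realize_tlt, realize_tdvd, fv, bv, relMap_lt,
    Matrix.cons_val_zero, Matrix.cons_val_one, Matrix.head_cons, Fin.snoc,
    Fin.val_zero, Nat.lt_irrefl, dif_neg, cast_eq, dite_false, dite_true]
  constructor
  · intro h
    rw [h]
    constructor
    · rw [← PNat.coe_lt_coe]; push_cast; omega
    · intro x hx
      rw [← PNat.coe_lt_coe] at hx ⊢
      push_cast at hx ⊢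
      omega
  · rintro ⟨h1, h2⟩
    have h3 := h2 (v 0 + 1) (by rw [← PNat.coe_lt_coe]; push_cast; omega)
    rw [← PNat.coe_lt_coe] at h1 h3
    rw [← PNat.coe_inj]
    push_cast at h3 ⊢
    omega

lemma d_double : Set.Definable (∅ : Set ℕ+) L {v : Fin 2 → ℕ+ | v 1 = 2 * v 0} := by
  rw [Set.empty_definable_iff]
  refine ⟨((tlt (fv 0) (fv 1)) ⊓ (tdvd (fv 0) (fv 1))) ⊓
    (BoundedFormula.all ((tdvd (fv 0) (bv 0)).imp ((tlt (fv 0) (bv 0)).imp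
      (∼(tlt (bv 0) (fv 1)))))), ?_⟩
  ext v
  simp only [Set.mem_setOf_eq, Formula.Realize, BoundedFormula.realize_all,
    BoundedFormula.realize_inf, BoundedFormula.realize_imp, BoundedFormula.realize_not,
    BoundedFormula.realize_rel₂, Term.realize_var,
    Sum.elim_inl, Sum.elim_inr, realize_tlt, realize_tdvd, fv, bv, relMap_lt, relMap_dvd,
    Matrix.cons_val_zero, Matrix.cons_val_one, Matrix.head_cons, Fin.snoc,
    Fin.val_zero, Nat.lt_irrefl, dif_neg, cast_eq, dite_false, dite_true]
  have hmul : ∀ x w : ℕ+, x ∣ w → x < w → ¬ w < 2 * x := by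
    intro x w hdvd hlt hcon
    obtain ⟨t, ht⟩ := PNat.dvd_iff.mp hdvd
    rw [← PNat.coe_lt_coe] at hlt hcon
    push_cast at hcon
    have hx := x.pos
    have : 2 ≤ t := by nlinarith [x.pos, w.pos]
    nlinarith
  constructor
  · intro h
    rw [h]
    refine ⟨⟨?_, ⟨2, by rw [mul_comm]⟩⟩, ?_⟩
    · rw [← PNat.coe_lt_coe]; push_cast; have := (v 0).pos; omega
    · intro w hdvd hlt
      exact hmul _ _ hdvd hlt
  · rintro ⟨⟨h1, h2⟩, h3⟩
    have h4 := h3 (2 * v 0) (⟨2, by rw [mul_comm]⟩)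
      (by rw [← PNat.coe_lt_coe]; push_cast; have := (v 0).pos; omega)
    have h5 := hmul (v 0) (v 1) h2 h1
    rw [← PNat.coe_lt_coe] at h4 h5
    rw [← PNat.coe_inj]
    omega

lemma d_lcm : Set.Definable (∅ : Set ℕ+) L {v : Fin 3 → ℕ+ | v 2 = PNat.lcm (v 0) (v 1)} := by
  rw [Set.empty_definable_iff]
  refine ⟨((tdvd (fv 0) (fv 2)) ⊓ (tdvd (fv 1) (fv 2))) ⊓
    (BoundedFormula.all ((tdvd (fv 0) (bv 0)).imp ((tdvd (fv 1) (bv 0)).imp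
      (tdvd (fv 2) (bv 0))))), ?_⟩
  ext v
  simp only [Set.mem_setOf_eq, Formula.Realize, BoundedFormula.realize_all,
    BoundedFormula.realize_inf, BoundedFormula.realize_imp,
    BoundedFormula.realize_rel₂, Term.realize_var,
    Sum.elim_inl, Sum.elim_inr, realize_tlt, realize_tdvd, fv, bv, relMap_dvd,
    Matrix.cons_val_zero, Matrix.cons_val_one, Matrix.head_cons, Fin.snoc,
    Fin.val_zero, Nat.lt_irrefl, dif_neg, cast_eq, dite_false, dite_true]
  constructor
  · intro h
    rw [h]
    exact ⟨⟨PNat.dvd_lcm_left _ _, PNat.dvd_lcm_right _ _⟩, fun w h1 h2 => PNat.lcm_dvd h1 h2⟩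
  · rintro ⟨⟨h1, h2⟩, h3⟩
    exact PNat.dvd_antisymm (h3 _ (PNat.dvd_lcm_left _ _) (PNat.dvd_lcm_right _ _))
      (PNat.lcm_dvd h1 h2)

/-! ### Assembly -/

lemma d_reindex {m n : ℕ} (f : Fin m → Fin n) {s : Set (Fin m → ℕ+)}
    (h : Set.Definable (∅ : Set ℕ+) L s) :
    Set.Definable (∅ : Set ℕ+) L {v : Fin n → ℕ+ | (fun i => v (f i)) ∈ s} :=
  h.preimage_comp f

/-- The big conjunction of conditions on 17 variables. -/
def Cond (w : Fin 17 → ℕ+) : Prop :=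
  ((w 3 : ℕ)).Prime ∧ w 2 < w 3 ∧ w 6 = 2 * w 0 ∧ w 6 < w 3 ∧ w 7 = 2 * w 1 ∧ w 7 < w 3 ∧
  (w 4).Coprime (w 0) ∧ (w 4).Coprime (w 1) ∧ (w 4).Coprime (w 2) ∧
  w 8 = PNat.lcm (w 4) (w 0) ∧ w 9 = w 8 + 1 ∧ w 3 ∣ w 9 ∧
  w 10 = PNat.lcm (w 4) (w 1) ∧ w 11 = PNat.lcm (w 4) (w 2) ∧ w 12 = w 11 + 1 ∧
  (w 5).Coprime (w 10) ∧ (w 5).Coprime (w 12) ∧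
  w 13 = PNat.lcm (w 5) (w 10) ∧ w 14 = w 13 + 1 ∧ w 3 ∣ w 14 ∧
  w 15 = PNat.lcm (w 5) (w 12) ∧ w 16 = w 15 + 1 ∧ w 3 ∣ w 16

lemma d_cond : Set.Definable (∅ : Set ℕ+) L {w : Fin 17 → ℕ+ | Cond w} := by
  have h := (d_reindex (n := 17) ![3] d_prime).inter ((d_reindex (n := 17) ![2,3] d_lt).inter
    ((d_reindex (n := 17) ![0,6] d_double).inter ((d_reindex (n := 17) ![6,3] d_lt).inter
    ((d_reindex (n := 17) ![1,7] d_double).inter ((d_reindex (n := 17) ![7,3] d_lt).inter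
    ((d_reindex (n := 17) ![4,0] d_coprime).inter ((d_reindex (n := 17) ![4,1] d_coprime).inter
    ((d_reindex (n := 17) ![4,2] d_coprime).inter ((d_reindex (n := 17) ![4,0,8] d_lcm).inter
    ((d_reindex (n := 17) ![8,9] d_succ).inter ((d_reindex (n := 17) ![3,9] d_dvd).inter
    ((d_reindex (n := 17) ![4,1,10] d_lcm).inter ((d_reindex (n := 17) ![4,2,11] d_lcm).inter
    ((d_reindex (n := 17) ![11,12] d_succ).inter ((d_reindex (n := 17) ![5,10] d_coprime).inter
    ((d_reindex (n := 17) ![5,12] d_coprime).inter ((d_reindex (n := 17) ![5,10,13] d_lcm).inter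
    ((d_reindex (n := 17) ![13,14] d_succ).inter ((d_reindex (n := 17) ![3,14] d_dvd).inter
    ((d_reindex (n := 17) ![5,12,15] d_lcm).inter ((d_reindex (n := 17) ![15,16] d_succ).inter
    (d_reindex (n := 17) ![3,16] d_dvd))))))))))))))))))))))
  convert h using 1
  rfl

lemma master (v : Fin 3 → ℕ+) :
    (∃ w : Fin 17 → ℕ+, Cond w ∧ w ∘ (Fin.castLE (by norm_num)) = v) ↔ v 0 + v 1 = v 2 := by
  constructor
  · rintro ⟨w, hc, hw⟩
    obtain ⟨hm, hcm, h2a, h2am, h2b, h2bm, hka, hkb, hkc, hP, hsP, hdsP, hQ, hR, hsR,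
      hjQ, hjsR, hT, hsT, hdsT, hU, hsU, hdsU⟩ := hc
    have hv0 : w 0 = v 0 := congrFun hw 0
    have hv1 : w 1 = v 1 := congrFun hw 1
    have hv2 : w 2 = v 2 := congrFun hw 2
    have hPn : (w 8 : ℕ) = (w 4 : ℕ) * (w 0 : ℕ) := by
      rw [hP, PNat.lcm_coe]; exact (PNat.coprime_coe.mpr hka).lcm_eq_mul
    have hQn : (w 10 : ℕ) = (w 4 : ℕ) * (w 1 : ℕ) := by
      rw [hQ, PNat.lcm_coe]; exact (PNat.coprime_coe.mpr hkb).lcm_eq_mul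
    have hRn : (w 11 : ℕ) = (w 4 : ℕ) * (w 2 : ℕ) := by
      rw [hR, PNat.lcm_coe]; exact (PNat.coprime_coe.mpr hkc).lcm_eq_mul
    have hTn : (w 13 : ℕ) = (w 5 : ℕ) * (w 10 : ℕ) := by
      rw [hT, PNat.lcm_coe]; exact (PNat.coprime_coe.mpr hjQ).lcm_eq_mul
    have hUn : (w 15 : ℕ) = (w 5 : ℕ) * (w 12 : ℕ) := by
      rw [hU, PNat.lcm_coe]; exact (PNat.coprime_coe.mpr hjsR).lcm_eq_mul
    have h1 : (w 3 : ℕ) ∣ (w 4 : ℕ) * (w 0 : ℕ) + 1 := by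
      have hd := PNat.dvd_iff.mp hdsP
      rw [hsP] at hd; push_cast at hd; rw [hPn] at hd; exact hd
    have h2 : (w 3 : ℕ) ∣ (w 5 : ℕ) * ((w 4 : ℕ) * (w 1 : ℕ)) + 1 := by
      have hd := PNat.dvd_iff.mp hdsT
      rw [hsT] at hd; push_cast at hd; rw [hTn, hQn] at hd; exact hd
    have h3 : (w 3 : ℕ) ∣ (w 5 : ℕ) * ((w 4 : ℕ) * (w 2 : ℕ) + 1) + 1 := by
      have hd := PNat.dvd_iff.mp hdsU
      rw [hsU] at hd; push_cast at hd; rw [hUn, hsR] at hd; push_cast at hd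
      rw [hRn] at hd; exact hd
    have hcmn : (w 2 : ℕ) < (w 3 : ℕ) := (PNat.coe_lt_coe _ _).mpr hcm
    have h2an : 2 * (w 0 : ℕ) < (w 3 : ℕ) := by
      have := (PNat.coe_lt_coe _ _).mpr h2am
      rw [h2a] at this; push_cast at this; exact this
    have h2bn : 2 * (w 1 : ℕ) < (w 3 : ℕ) := by
      have := (PNat.coe_lt_coe _ _).mpr h2bm
      rw [h2b] at this; push_cast at this; exact this
    have hfin := core1 hm hcmn h2an h2bn h1 h2 h3
    rw [← hv0, ← hv1, ← hv2, ← PNat.coe_inj, PNat.add_coe]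
    exact hfin
  · intro h
    have hc' : ((v 2 : ℕ)) = (v 0 : ℕ) + (v 1 : ℕ) := by rw [← PNat.add_coe, h]
    obtain ⟨m, k, j, hm, hcm, ham, hbm, hkpos, hjpos, hka, hkb, hkc, hjX, hjY, h1, h2, h3⟩ :=
      core2 (v 0).pos (v 1).pos hc'
    refine ⟨fun i => match i with
      | ⟨0, _⟩ => v 0
      | ⟨1, _⟩ => v 1
      | ⟨2, _⟩ => v 2
      | ⟨3, _⟩ => ⟨m, hm.pos⟩
      | ⟨4, _⟩ => ⟨k, hkpos⟩
      | ⟨5, _⟩ => ⟨j, hjpos⟩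
      | ⟨6, _⟩ => 2 * v 0
      | ⟨7, _⟩ => 2 * v 1
      | ⟨8, _⟩ => ⟨k, hkpos⟩ * v 0
      | ⟨9, _⟩ => ⟨k, hkpos⟩ * v 0 + 1
      | ⟨10, _⟩ => ⟨k, hkpos⟩ * v 1
      | ⟨11, _⟩ => ⟨k, hkpos⟩ * v 2
      | ⟨12, _⟩ => ⟨k, hkpos⟩ * v 2 + 1
      | ⟨13, _⟩ => ⟨j, hjpos⟩ * (⟨k, hkpos⟩ * v 1)
      | ⟨14, _⟩ => ⟨j, hjpos⟩ * (⟨k, hkpos⟩ * v 1) + 1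
      | ⟨15, _⟩ => ⟨j, hjpos⟩ * (⟨k, hkpos⟩ * v 2 + 1)
      | ⟨16, _⟩ => ⟨j, hjpos⟩ * (⟨k, hkpos⟩ * v 2 + 1) + 1
      | ⟨n + 17, hn⟩ => absurd hn (by omega), ?_, ?_⟩
    · refine ⟨hm, (PNat.coe_lt_coe _ _).mp hcm, rfl, (PNat.coe_lt_coe _ _).mp ham, rfl,
        (PNat.coe_lt_coe _ _).mp hbm,
        PNat.coprime_coe.mp hka, PNat.coprime_coe.mp hkb, PNat.coprime_coe.mp hkc,
        PNat.coe_inj.mp hka.lcm_eq_mul.symm, rfl, PNat.dvd_iff.mpr h1,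
        PNat.coe_inj.mp hkb.lcm_eq_mul.symm, PNat.coe_inj.mp hkc.lcm_eq_mul.symm, rfl,
        PNat.coprime_coe.mp hjX, PNat.coprime_coe.mp hjY,
        PNat.coe_inj.mp hjX.lcm_eq_mul.symm, rfl, PNat.dvd_iff.mpr h2,
        PNat.coe_inj.mp hjY.lcm_eq_mul.symm, rfl, PNat.dvd_iff.mpr h3⟩
    · funext i
      fin_cases i <;> rfl

theorem add_definable_in_lt_dvd :
    Set.Definable (∅ : Set ℕ+) L {v : Fin 3 → ℕ+ | v 0 + v 1 = v 2} := by
  have h := d_cond.image_comp (Fin.castLE (by norm_num : 3 ≤ 17))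
  convert h using 1
  ext v
  simp only [Set.mem_image, Set.mem_setOf_eq]
  rw [← master v]
end

section
/- Consider the first-order language L with two binary relation symbols, and endow the set ℕ₊ of positive natural numbers with the L-structure in which the first relation symbol is interpreted as the strict order < and the second as the divisibility relation ∣. Then the graph of multiplication, i.e. the set {v : Fin 3 → ℕ₊ | v 0 * v 1 = v 2}, is definable in this structure without parameters. -/
open FirstOrder FirstOrder.Language Set

/-- Abbreviation for parameter-free definability of pnat sets. -/
abbrev PDef {n : ℕ} (s : Set (Fin n → ℕ+)) : Prop := Set.Definable (∅ : Set ℕ+) L s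

lemma def_lt {n : ℕ} (i j : Fin n) : PDef {v | v i < v j} := by
  refine Set.empty_definable_iff.mpr ⟨Relations.formula₂ (L := L) OrdDvdRel.lt
    (FirstOrder.Language.Term.var i) (FirstOrder.Language.Term.var j), ?_⟩
  ext v
  simp only [Set.mem_setOf_eq, Formula.realize_rel₂, Term.realize_var]
  exact Iff.rfl

lemma def_dvd {n : ℕ} (i j : Fin n) : PDef {v | v i ∣ v j} := by
  refine Set.empty_definable_iff.mpr ⟨Relations.formula₂ (L := L) OrdDvdRel.dvd
    (FirstOrder.Language.Term.var i) (FirstOrder.Language.Term.var j), ?_⟩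
  ext v
  simp only [Set.mem_setOf_eq, Formula.realize_rel₂, Term.realize_var]
  exact Iff.rfl

lemma def_le {n : ℕ} (i j : Fin n) : PDef {v | v i ≤ v j} := by
  have h := (def_lt j i).compl
  convert h using 1
  ext v
  simp [not_lt]

lemma def_ex {n k : ℕ} {S : Set (Fin (n + k) → ℕ+)} (h : PDef S) :
    PDef {v : Fin n → ℕ+ | ∃ w : Fin k → ℕ+, Fin.append v w ∈ S} := by
  have h2 := h.image_comp (Fin.castAdd k)
  convert h2 using 1
  ext v
  constructor
  · rintro ⟨w, hw⟩
    exact ⟨Fin.append v w, hw, by ext i; simp [Fin.append_left]⟩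
  · rintro ⟨g, hg, rfl⟩
    refine ⟨g ∘ Fin.natAdd n, ?_⟩
    have : Fin.append ((fun g : Fin (n+k) → ℕ+ => g ∘ Fin.castAdd k) g) (g ∘ Fin.natAdd n) = g :=
      Fin.append_castAdd_natAdd
    rwa [this]

lemma def_all {n k : ℕ} {S : Set (Fin (n + k) → ℕ+)} (h : PDef S) :
    PDef {v : Fin n → ℕ+ | ∀ w : Fin k → ℕ+, Fin.append v w ∈ S} := by
  have h2 := (def_ex h.compl).compl
  convert h2 using 1
  ext v
  simp

/-- The auxiliary divisibility conditions characterizing `z = x * y` by minimality. -/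
def cnd (x y z : ℕ+) : Prop :=
  x ∣ z ∧ y ∣ z ∧ (x + 1) ∣ (z + y) ∧ (y + 1) ∣ (z + x)

lemma step_lemma (x z u : ℕ+) (hz : x ∣ z) (hu : x ∣ u) (h : z < u) : z + x ≤ u := by
  rw [PNat.dvd_iff] at hz hu
  rw [← PNat.coe_lt_coe] at h
  rw [← PNat.coe_le_coe, PNat.add_coe]
  have h1 : (x : ℕ) ∣ (u : ℕ) - (z : ℕ) := Nat.dvd_sub hu hz
  have h2 : (x : ℕ) ≤ (u : ℕ) - (z : ℕ) := Nat.le_of_dvd (by omega) h1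
  omega

lemma succ_char (a b : ℕ+) : b = a + 1 ↔ (a < b ∧ ∀ c : ℕ+, a < c → b ≤ c) := by
  constructor
  · rintro rfl
    refine ⟨?_, fun c hc => ?_⟩
    · rw [← PNat.coe_lt_coe, PNat.add_coe, PNat.one_coe]; omega
    · rw [← PNat.coe_lt_coe] at hc
      rw [← PNat.coe_le_coe, PNat.add_coe, PNat.one_coe]
      omega
  · rintro ⟨h1, h2⟩
    have h3 := h2 (a + 1) (by rw [← PNat.coe_lt_coe, PNat.add_coe, PNat.one_coe]; omega)
    rw [← PNat.coe_le_coe, PNat.add_coe, PNat.one_coe] at h3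
    rw [← PNat.coe_lt_coe] at h1
    rw [← PNat.coe_inj]
    rw [PNat.add_coe, PNat.one_coe]
    omega

lemma nm_char (x z w : ℕ+) :
    (x ∣ z ∧ w = z + x) ↔
      (x ∣ z ∧ x ∣ w ∧ z < w ∧ ∀ u : ℕ+, x ∣ u → z < u → w ≤ u) := by
  constructor
  · rintro ⟨hz, rfl⟩
    refine ⟨hz, ?_, ?_, fun u hu hlt => step_lemma x z u hz hu hlt⟩
    · rw [PNat.dvd_iff] at hz ⊢
      rw [PNat.add_coe]
      exact Nat.dvd_add hz dvd_rfl
    · have hx : 0 < (x : ℕ) := x.2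
      rw [← PNat.coe_lt_coe, PNat.add_coe]; omega
  · rintro ⟨hz, hw, hlt, hmin⟩
    refine ⟨hz, le_antisymm ?_ (step_lemma x z w hz hw hlt)⟩
    refine hmin (z + x) ?_ ?_
    · rw [PNat.dvd_iff] at hz ⊢
      rw [PNat.add_coe]
      exact Nat.dvd_add hz dvd_rfl
    · have hx : 0 < (x : ℕ) := x.2
      rw [← PNat.coe_lt_coe, PNat.add_coe]; omega

lemma cnd_mul (x y : ℕ+) : cnd x y (x * y) := by
  refine ⟨dvd_mul_right x y, dvd_mul_left y x, ⟨y, ?_⟩, ⟨x, ?_⟩⟩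
  · apply PNat.coe_injective
    push_cast
    ring
  · apply PNat.coe_injective
    push_cast
    ring

lemma min_cnd (x y w : ℕ+) (h : cnd x y w) : x * y ≤ w := by
  obtain ⟨h1, h2, h3, h4⟩ := h
  rw [PNat.dvd_iff] at h1 h2 h3 h4
  rw [← PNat.coe_le_coe, PNat.mul_coe]
  by_contra hcon
  push_neg at hcon
  set X : ℤ := ((x : ℕ) : ℤ) with hX
  set Y : ℤ := ((y : ℕ) : ℤ) with hY
  set W : ℤ := ((w : ℕ) : ℤ) with hW
  have hX1 : 1 ≤ X := by simp [hX]; exact_mod_cast x.one_le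
  have hY1 : 1 ≤ Y := by simp [hY]; exact_mod_cast y.one_le
  have hW1 : 1 ≤ W := by simp [hW]; exact_mod_cast w.one_le
  have hcon' : W < X * Y := by rw [hX, hY, hW]; exact_mod_cast hcon
  have d1 : X ∣ W - X * Y := by
    have : X ∣ W := Int.natCast_dvd_natCast.mpr h1
    exact dvd_sub this (Dvd.intro Y rfl)
  have d2 : Y ∣ W - X * Y := by
    have : Y ∣ W := Int.natCast_dvd_natCast.mpr h2
    exact dvd_sub this (Dvd.intro_left X rfl)
  have d3 : (X + 1) ∣ W - X * Y := by
    have hA : (X + 1) ∣ W + Y := by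
      have := Int.natCast_dvd_natCast.mpr h3
      push_cast at this
      convert this using 1
    have hB : (X + 1) ∣ X * Y + Y := ⟨Y, by ring⟩
    have := dvd_sub hA hB
    rw [show W - X * Y = W + Y - (X * Y + Y) by ring]
    exact this
  have d4 : (Y + 1) ∣ W - X * Y := by
    have hA : (Y + 1) ∣ W + X := by
      have := Int.natCast_dvd_natCast.mpr h4
      push_cast at this
      convert this using 1
    have hB : (Y + 1) ∣ X * Y + X := ⟨X, by ring⟩
    have := dvd_sub hA hB
    rw [show W - X * Y = W + X - (X * Y + X) by ring]
    exact this
  have c1 : IsCoprime X (X + 1) := ⟨-1, 1, by ring⟩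
  have c2 : IsCoprime Y (Y + 1) := ⟨-1, 1, by ring⟩
  have dd1 : X * (X + 1) ∣ W - X * Y := c1.mul_dvd d1 d3
  have dd2 : Y * (Y + 1) ∣ W - X * Y := c2.mul_dvd d2 d4
  have hne : W - X * Y ≠ 0 := by omega
  have e1 : X * (X + 1) ≤ |W - X * Y| :=
    Int.le_of_dvd (abs_pos.mpr hne) ((dvd_abs _ _).mpr dd1)
  have e2 : Y * (Y + 1) ≤ |W - X * Y| :=
    Int.le_of_dvd (abs_pos.mpr hne) ((dvd_abs _ _).mpr dd2)
  have habs : |W - X * Y| = X * Y - W := by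
    rw [abs_of_neg (by omega)]
    ring
  rw [habs] at e1 e2
  nlinarith [sq_nonneg (X - Y)]

lemma mul_char (x y z : ℕ+) :
    x * y = z ↔ (cnd x y z ∧ ∀ w : ℕ+, cnd x y w → z ≤ w) := by
  constructor
  · rintro rfl
    exact ⟨cnd_mul x y, fun w hw => min_cnd x y w hw⟩
  · rintro ⟨hz, hmin⟩
    exact le_antisymm (min_cnd x y z hz) (hmin _ (cnd_mul x y))

lemma def_succS {n : ℕ} (i j : Fin n) : PDef {v | v j = v i + 1} := by
  have h : PDef {v : Fin n → ℕ+ | ∀ w : Fin 1 → ℕ+, Fin.append v w ∈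
      ({u : Fin (n + 1) → ℕ+ | u (Fin.castAdd 1 i) < u (Fin.natAdd n 0)}ᶜ ∪
       {u : Fin (n + 1) → ℕ+ | u (Fin.castAdd 1 j) ≤ u (Fin.natAdd n 0)})} :=
    def_all ((def_lt _ _).compl.union (def_le _ _))
  have h2 := (def_lt i j).inter h
  convert h2 using 1
  ext v
  simp only [Set.mem_setOf_eq, Set.mem_inter_iff, Set.mem_union, Set.mem_compl_iff,
    Fin.append_left, Fin.append_right, not_lt]
  rw [succ_char]
  constructor
  · rintro ⟨h1, h2⟩
    refine ⟨h1, fun w => ?_⟩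
    rcases lt_or_ge (v i) (w 0) with hc | hc
    · exact Or.inr (h2 _ hc)
    · exact Or.inl hc
  · rintro ⟨h1, h2⟩
    refine ⟨h1, fun c hc => ?_⟩
    rcases h2 (fun _ => c) with hc' | hc'
    · exact absurd hc (not_lt.mpr hc')
    · exact hc'

lemma def_nmS {n : ℕ} (i j k : Fin n) : PDef {v | v i ∣ v j ∧ v k = v j + v i} := by
  have h : PDef {v : Fin n → ℕ+ | ∀ w : Fin 1 → ℕ+, Fin.append v w ∈
      (({u : Fin (n + 1) → ℕ+ | u (Fin.castAdd 1 i) ∣ u (Fin.natAdd n 0)} ∩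
        {u : Fin (n + 1) → ℕ+ | u (Fin.castAdd 1 j) < u (Fin.natAdd n 0)})ᶜ ∪
       {u : Fin (n + 1) → ℕ+ | u (Fin.castAdd 1 k) ≤ u (Fin.natAdd n 0)})} :=
    def_all (((def_dvd _ _).inter (def_lt _ _)).compl.union (def_le _ _))
  have h2 := (def_dvd i j).inter ((def_dvd i k).inter ((def_lt j k).inter h))
  convert h2 using 1
  ext v
  simp only [Set.mem_setOf_eq, Set.mem_inter_iff, Set.mem_union, Set.mem_compl_iff,
    Fin.append_left, Fin.append_right, not_and, not_lt]
  rw [nm_char]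
  constructor
  · rintro ⟨h1, h2, h3, h4⟩
    refine ⟨h1, h2, h3, fun w => ?_⟩
    rcases lt_or_ge (v j) (w 0) with hc | hc
    · by_cases hd : v i ∣ w 0
      · exact Or.inr (h4 _ hd hc)
      · exact Or.inl (fun hd' => absurd hd' hd)
    · exact Or.inl (fun _ => hc)
  · rintro ⟨h1, h2, h3, h4⟩
    refine ⟨h1, h2, h3, fun u hu hltu => ?_⟩
    rcases h4 (fun _ => u) with hc' | hc'
    · exact absurd hltu (not_lt.mpr (hc' hu))
    · exact hc'

lemma def_cndS {n : ℕ} (i j k : Fin n) : PDef {v | cnd (v i) (v j) (v k)} := by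
  have h := def_ex (n := n) (k := 4)
    ((def_nmS (Fin.castAdd 4 i) (Fin.castAdd 4 k) (Fin.natAdd n 0)).inter
    ((def_nmS (Fin.castAdd 4 j) (Fin.castAdd 4 k) (Fin.natAdd n 1)).inter
    ((def_succS (Fin.castAdd 4 i) (Fin.natAdd n 2)).inter
    ((def_succS (Fin.castAdd 4 j) (Fin.natAdd n 3)).inter
    ((def_dvd (Fin.natAdd n 2) (Fin.natAdd n 1)).inter
     (def_dvd (Fin.natAdd n 3) (Fin.natAdd n 0)))))))
  convert h using 1
  ext v
  simp only [Set.mem_setOf_eq, Set.mem_inter_iff, Fin.append_left, Fin.append_right]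
  constructor
  · rintro ⟨h1, h2, h3, h4⟩
    refine ⟨![v k + v i, v k + v j, v i + 1, v j + 1], ?_⟩
    exact ⟨⟨h1, rfl⟩, ⟨h2, rfl⟩, rfl, rfl, h3, h4⟩
  · rintro ⟨w, ⟨hd1, hw0⟩, ⟨hd2, hw1⟩, hw2, hw3, hdv1, hdv2⟩
    refine ⟨hd1, hd2, ?_, ?_⟩
    · rw [← hw2, ← hw1]; exact hdv1
    · rw [← hw3, ← hw0]; exact hdv2

theorem mul_definable_in_lt_dvd :
    Set.Definable (∅ : Set ℕ+) L {v : Fin 3 → ℕ+ | v 0 * v 1 = v 2} := by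
  have h := (def_cndS (0 : Fin 3) 1 2).inter (def_all (n := 3) (k := 1)
    (((def_cndS (Fin.castAdd 1 (0 : Fin 3)) (Fin.castAdd 1 (1 : Fin 3))
        (Fin.natAdd 3 0)).compl).union
     (def_le (Fin.castAdd 1 (2 : Fin 3)) (Fin.natAdd 3 0))))
  convert h using 1
  ext v
  simp only [Set.mem_setOf_eq, Set.mem_inter_iff, Set.mem_union, Set.mem_compl_iff,
    Fin.append_left, Fin.append_right]
  rw [mul_char]
  constructor
  · rintro ⟨h1, h2⟩
    refine ⟨h1, fun w => ?_⟩
    by_cases hc : cnd (v 0) (v 1) (w 0)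
    · exact Or.inr (h2 _ hc)
    · exact Or.inl hc
  · rintro ⟨h1, h2⟩
    refine ⟨h1, fun c hc => ?_⟩
    rcases h2 (fun _ => c) with hc' | hc'
    · exact absurd hc hc'
    · exact hc'
end
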